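/- For a star body A ⊆ ℝ^d, the radial distance functional d_r(·,A) : ℝ^d → ℝ is continuous if and only if the radial function ρ_A : S^{d-1} → [0,∞] is continuous. -/

import Mathlib

open scoped ENNReal

noncomputable section

/-- Radial function of a set `A ⊆ ℝ^d` in direction `θ`. -/
def radialFn {d : ℕ} (A : Set (EuclideanSpace ℝ (Fin d)))
    (θ : EuclideanSpace ℝ (Fin d)) : ℝ≥0∞ :=
  sSup (ENNReal.ofReal '' {r : ℝ | 0 ≤ r ∧ r • θ ∈ A})

/-- A star set: nonempty and closed under scaling by `t ∈ [0,1]`. -/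
def IsStarSet {d : ℕ} (A : Set (EuclideanSpace ℝ (Fin d))) : Prop :=
  A.Nonempty ∧ ∀ a ∈ A, ∀ t : ℝ, 0 ≤ t → t ≤ 1 → t • a ∈ A

/-- A star body: a radially closed star set. -/
def IsStarBody {d : ℕ} (A : Set (EuclideanSpace ℝ (Fin d))) : Prop :=
  IsStarSet A ∧ ∀ θ : EuclideanSpace ℝ (Fin d), ‖θ‖ = 1 → radialFn A θ ≠ ⊤ →
    (radialFn A θ).toReal • θ ∈ A

open scoped Classical in
/-- The radial distance from a point `x` to a star body `A`:
`0` if `x ∈ A`, and `‖x‖ - ρ_A(x/‖x‖)` otherwise. -/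
def radialDist {d : ℕ} (x : EuclideanSpace ℝ (Fin d))
    (A : Set (EuclideanSpace ℝ (Fin d))) : ℝ :=
  if x ∈ A then 0 else ‖x‖ - (radialFn A (‖x‖⁻¹ • x)).toReal

open Filter Topology

variable {d : ℕ} {A : Set (EuclideanSpace ℝ (Fin d))}

lemma zero_mem_of_star (h : IsStarSet A) : (0 : EuclideanSpace ℝ (Fin d)) ∈ A := by
  obtain ⟨a, ha⟩ := h.1
  simpa using h.2 a ha 0 le_rfl zero_le_one

lemma smul_mem_of_le (h : IsStarSet A) {θ : EuclideanSpace ℝ (Fin d)} {r s : ℝ}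
    (hs : s • θ ∈ A) (hr : 0 ≤ r) (hrs : r ≤ s) : r • θ ∈ A := by
  rcases eq_or_lt_of_le (hr.trans hrs) with h0 | h0
  · have : r = 0 := le_antisymm (hrs.trans h0.symm.le) hr
    rw [this]; rw [← h0] at hs; exact hs
  · have := h.2 _ hs (r / s) (div_nonneg hr h0.le) ((div_le_one h0).2 hrs)
    rwa [smul_smul, div_mul_cancel₀ _ h0.ne'] at this

lemma mem_iff_ofReal_le (hA : IsStarBody A) {θ : EuclideanSpace ℝ (Fin d)}
    (hθ : ‖θ‖ = 1) {r : ℝ} (hr : 0 ≤ r) :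
    r • θ ∈ A ↔ ENNReal.ofReal r ≤ radialFn A θ := by
  constructor
  · intro h
    exact le_sSup ⟨r, ⟨hr, h⟩, rfl⟩
  · intro h
    by_cases htop : radialFn A θ = ⊤
    · have hlt : ENNReal.ofReal r < sSup (ENNReal.ofReal '' {r : ℝ | 0 ≤ r ∧ r • θ ∈ A}) := by
        rw [show sSup (ENNReal.ofReal '' {r : ℝ | 0 ≤ r ∧ r • θ ∈ A}) = radialFn A θ from rfl,
          htop]
        exact ENNReal.ofReal_lt_top
      obtain ⟨_, ⟨s, ⟨hs0, hsA⟩, rfl⟩, hlt'⟩ := lt_sSup_iff.mp hlt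
      exact smul_mem_of_le hA.1 hsA hr
        ((ENNReal.ofReal_lt_ofReal_iff_of_nonneg hr).mp hlt').le
    · have hmem := hA.2 θ hθ htop
      exact smul_mem_of_le hA.1 hmem hr
        ((ENNReal.ofReal_le_iff_le_toReal htop).mp h)

lemma radialFn_zero_of_star (h : IsStarSet A) :
    radialFn A (0 : EuclideanSpace ℝ (Fin d)) = ⊤ := by
  refine ENNReal.eq_top_of_forall_nnreal_le fun r => ?_
  have : ((r : ℝ)) • (0 : EuclideanSpace ℝ (Fin d)) ∈ A := by
    simpa using zero_mem_of_star h
  rw [radialFn]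
  exact le_sSup ⟨(r : ℝ), ⟨r.coe_nonneg, this⟩, ENNReal.ofReal_coe_nnreal⟩

lemma radialDist_eq (hA : IsStarBody A) (x : EuclideanSpace ℝ (Fin d)) :
    radialDist x A = (ENNReal.ofReal ‖x‖ - radialFn A (‖x‖⁻¹ • x)).toReal := by
  by_cases hx : x = 0
  · subst hx
    simp [radialDist, zero_mem_of_star hA.1, radialFn_zero_of_star hA.1, zero_tsub]
  · have hnx : (0:ℝ) < ‖x‖ := norm_pos_iff.2 hx
    have hθ : ‖(‖x‖⁻¹ • x)‖ = 1 := by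
      rw [norm_smul, norm_inv, norm_norm, inv_mul_cancel₀ hnx.ne']
    have hxeq : ‖x‖ • (‖x‖⁻¹ • x) = x := by
      rw [smul_smul, mul_inv_cancel₀ hnx.ne', one_smul]
    have hmem := mem_iff_ofReal_le hA hθ hnx.le
    rw [hxeq] at hmem
    by_cases hxA : x ∈ A
    · rw [radialDist, if_pos hxA, tsub_eq_zero_of_le (hmem.mp hxA), ENNReal.toReal_zero]
    · have hlt : radialFn A (‖x‖⁻¹ • x) < ENNReal.ofReal ‖x‖ :=
        lt_of_not_ge fun h => hxA (hmem.mpr h)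
      rw [radialDist, if_neg hxA,
        ENNReal.toReal_sub_of_le hlt.le ENNReal.ofReal_ne_top,
        ENNReal.toReal_ofReal hnx.le]

lemma radialDist_smul (hA : IsStarBody A) {θ : EuclideanSpace ℝ (Fin d)}
    (hθ : ‖θ‖ = 1) {r : ℝ} (hr : 0 < r) :
    radialDist (r • θ) A = (ENNReal.ofReal r - radialFn A θ).toReal := by
  rw [radialDist_eq hA]
  have h1 : ‖r • θ‖ = r := by rw [norm_smul, hθ, mul_one, Real.norm_eq_abs, abs_of_pos hr]
  rw [h1, smul_smul, inv_mul_cancel₀ hr.ne', one_smul]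

lemma radialDist_eq' (hA : IsStarBody A) (x : EuclideanSpace ℝ (Fin d)) :
    radialDist x A
      = ‖x‖ - (min (ENNReal.ofReal ‖x‖) (radialFn A (‖x‖⁻¹ • x))).toReal := by
  rw [radialDist_eq hA, tsub_eq_tsub_min,
    ENNReal.toReal_sub_of_le (min_le_left _ _) ENNReal.ofReal_ne_top,
    ENNReal.toReal_ofReal (norm_nonneg x)]

lemma radialDist_nonneg (hA : IsStarBody A) (x : EuclideanSpace ℝ (Fin d)) :
    0 ≤ radialDist x A := by
  rw [radialDist_eq hA]; exact ENNReal.toReal_nonneg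

lemma radialDist_le_norm (hA : IsStarBody A) (x : EuclideanSpace ℝ (Fin d)) :
    radialDist x A ≤ ‖x‖ := by
  rw [radialDist_eq' hA]
  have : (0:ℝ) ≤ (min (ENNReal.ofReal ‖x‖) (radialFn A (‖x‖⁻¹ • x))).toReal :=
    ENNReal.toReal_nonneg
  linarith

theorem continuous_radialDist_iff' {d : ℕ} (A : Set (EuclideanSpace ℝ (Fin d)))
    (hA : IsStarBody A) :
    Continuous (fun x => radialDist x A) ↔
      Continuous fun θ : Metric.sphere (0 : EuclideanSpace ℝ (Fin d)) 1 =>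
        radialFn A (θ : EuclideanSpace ℝ (Fin d)) := by
  constructor
  · -- dist continuous → ρ continuous
    intro hc
    rw [continuous_iff_continuousAt]
    intro θ₀
    have hθ₀ : ‖(θ₀ : EuclideanSpace ℝ (Fin d))‖ = 1 :=
      mem_sphere_zero_iff_norm.mp θ₀.2
    have hsub : Continuous fun θ : Metric.sphere (0 : EuclideanSpace ℝ (Fin d)) 1 =>
        (θ : EuclideanSpace ℝ (Fin d)) := continuous_subtype_val
    by_cases htop : radialFn A (θ₀ : EuclideanSpace ℝ (Fin d)) = ⊤
    · -- infinite value: show tendsto to ⊤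
      have : Tendsto (fun θ : Metric.sphere (0 : EuclideanSpace ℝ (Fin d)) 1 =>
          radialFn A (θ : EuclideanSpace ℝ (Fin d))) (nhds θ₀) (nhds ⊤) := by
        rw [ENNReal.tendsto_nhds_top_iff_nnreal]
        intro M
        set r : ℝ := (M : ℝ) + 1 with hrdef
        have hr : 0 < r := by positivity
        have gcont : Continuous fun θ : Metric.sphere (0 : EuclideanSpace ℝ (Fin d)) 1 =>
            radialDist (r • (θ : EuclideanSpace ℝ (Fin d))) A :=
          hc.comp (continuous_const.fun_smul hsub)
        have hg0 : radialDist (r • (θ₀ : EuclideanSpace ℝ (Fin d))) A = 0 := by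
          rw [radialDist_smul hA hθ₀ hr, htop, tsub_eq_zero_of_le le_top,
            ENNReal.toReal_zero]
        have hev : ∀ᶠ θ : Metric.sphere (0 : EuclideanSpace ℝ (Fin d)) 1 in nhds θ₀,
            radialDist (r • (θ : EuclideanSpace ℝ (Fin d))) A < 1 := by
          have := gcont.continuousAt (x := θ₀)
          rw [ContinuousAt, hg0] at this
          exact this.eventually (tendsto_id.eventually_lt_const one_pos) |>.mono
            (fun θ h => h)
        refine hev.mono fun θ hθlt => ?_
        by_contra hle
        push_neg at hle
        have hθu : ‖(θ : EuclideanSpace ℝ (Fin d))‖ = 1 := mem_sphere_zero_iff_norm.mp θ.2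
        have hone : (1 : ℝ≥0∞) ≤ ENNReal.ofReal r - radialFn A (θ : EuclideanSpace ℝ (Fin d)) := by
          have h1 : ENNReal.ofReal r - (M : ℝ≥0∞)
              ≤ ENNReal.ofReal r - radialFn A (θ : EuclideanSpace ℝ (Fin d)) :=
            tsub_le_tsub_left hle _
          have h2 : ENNReal.ofReal r - (M : ℝ≥0∞) = 1 := by
            rw [hrdef, ENNReal.ofReal_add M.coe_nonneg zero_le_one,
              ENNReal.ofReal_coe_nnreal, ENNReal.ofReal_one, add_comm,
              ENNReal.add_sub_cancel_right ENNReal.coe_ne_top]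
          rw [← h2]; exact h1
        have hfin : ENNReal.ofReal r - radialFn A (θ : EuclideanSpace ℝ (Fin d)) ≠ ⊤ :=
          fun h => ENNReal.ofReal_ne_top (top_le_iff.mp (h ▸ tsub_le_self))
        have : (1 : ℝ) ≤ radialDist (r • (θ : EuclideanSpace ℝ (Fin d))) A := by
          rw [radialDist_smul hA hθu hr]
          calc (1:ℝ) = (1 : ℝ≥0∞).toReal := by simp
            _ ≤ _ := ENNReal.toReal_mono hfin hone
        linarith
      rwa [ContinuousAt, htop]
    · -- finite value
      set L : ℝ := (radialFn A (θ₀ : EuclideanSpace ℝ (Fin d))).toReal with hLdef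
      have hL0 : 0 ≤ L := ENNReal.toReal_nonneg
      set r : ℝ := L + 1 with hrdef
      have hr : 0 < r := by positivity
      set g : Metric.sphere (0 : EuclideanSpace ℝ (Fin d)) 1 → ℝ :=
        fun θ => radialDist (r • (θ : EuclideanSpace ℝ (Fin d))) A with hgdef
      have gcont : Continuous g := hc.comp (continuous_const.fun_smul hsub)
      have key : ∀ θ : Metric.sphere (0 : EuclideanSpace ℝ (Fin d)) 1, 0 < g θ →
          radialFn A (θ : EuclideanSpace ℝ (Fin d)) = ENNReal.ofReal (r - g θ) := by
        intro θ hgθ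
        have hθu : ‖(θ : EuclideanSpace ℝ (Fin d))‖ = 1 := mem_sphere_zero_iff_norm.mp θ.2
        have hgeq : g θ = (ENNReal.ofReal r - radialFn A (θ : EuclideanSpace ℝ (Fin d))).toReal :=
          radialDist_smul hA hθu hr
        rw [hgeq] at hgθ
        have hpos : 0 < ENNReal.ofReal r - radialFn A (θ : EuclideanSpace ℝ (Fin d)) :=
          (ENNReal.toReal_pos_iff.mp hgθ).1
        have hlt : radialFn A (θ : EuclideanSpace ℝ (Fin d)) < ENNReal.ofReal r :=
          tsub_pos_iff_lt.mp hpos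
        have hfin : radialFn A (θ : EuclideanSpace ℝ (Fin d)) ≠ ⊤ :=
          (hlt.trans_le le_top).ne
        have : g θ = r - (radialFn A (θ : EuclideanSpace ℝ (Fin d))).toReal := by
          rw [hgeq, ENNReal.toReal_sub_of_le hlt.le ENNReal.ofReal_ne_top,
            ENNReal.toReal_ofReal hr.le]
        rw [this]
        rw [sub_sub_cancel, ENNReal.ofReal_toReal hfin]
      have hgθ₀ : g θ₀ = 1 := by
        rw [hgdef]
        simp only
        rw [radialDist_smul hA hθ₀ hr]
        rw [show radialFn A (θ₀ : EuclideanSpace ℝ (Fin d)) = ENNReal.ofReal L from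
          (ENNReal.ofReal_toReal htop).symm]
        rw [← ENNReal.ofReal_sub _ hL0, hrdef]
        simp
      have hU : IsOpen {θ : Metric.sphere (0 : EuclideanSpace ℝ (Fin d)) 1 | 0 < g θ} :=
        isOpen_lt continuous_const gcont
      have hmem : θ₀ ∈ {θ : Metric.sphere (0 : EuclideanSpace ℝ (Fin d)) 1 | 0 < g θ} := by
        simp [Set.mem_setOf_eq, hgθ₀]
      have hcont : ContinuousAt (fun θ : Metric.sphere (0 : EuclideanSpace ℝ (Fin d)) 1 =>
          ENNReal.ofReal (r - g θ)) θ₀ :=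
        (ENNReal.continuous_ofReal.comp (continuous_const.sub gcont)).continuousAt
      have heq : (fun θ : Metric.sphere (0 : EuclideanSpace ℝ (Fin d)) 1 =>
            radialFn A (θ : EuclideanSpace ℝ (Fin d)))
          =ᶠ[nhds θ₀] (fun θ => ENNReal.ofReal (r - g θ)) :=
        Filter.eventually_of_mem (hU.mem_nhds hmem) key
      exact hcont.congr heq.symm
  · -- ρ continuous → dist continuous
    intro hρ
    have hform : (fun x => radialDist x A)
        = fun x => ‖x‖ - (min (ENNReal.ofReal ‖x‖) (radialFn A (‖x‖⁻¹ • x))).toReal :=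
      funext (radialDist_eq' hA)
    rw [continuous_iff_continuousAt]
    intro x
    by_cases hx : x = 0
    · subst hx
      have h0 : radialDist (0 : EuclideanSpace ℝ (Fin d)) A = 0 := by
        rw [radialDist, if_pos (zero_mem_of_star hA.1)]
      rw [ContinuousAt, h0]
      have : Tendsto (fun y : EuclideanSpace ℝ (Fin d) => ‖y‖) (nhds 0) (nhds 0) := by
        simpa using continuous_norm.tendsto (0 : EuclideanSpace ℝ (Fin d))
      exact squeeze_zero (fun y => radialDist_nonneg hA y) (fun y => radialDist_le_norm hA y) this
    · rw [hform]
      have hρ' : ContinuousOn (fun θ : EuclideanSpace ℝ (Fin d) => radialFn A θ)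
          (Metric.sphere (0 : EuclideanSpace ℝ (Fin d)) 1) :=
        continuousOn_iff_continuous_restrict.mpr hρ
      have hUopen : IsOpen {y : EuclideanSpace ℝ (Fin d) | y ≠ 0} := isOpen_compl_singleton
      have hxU : x ∈ {y : EuclideanSpace ℝ (Fin d) | y ≠ 0} := hx
      have hncont : ContinuousOn (fun y : EuclideanSpace ℝ (Fin d) => ‖y‖⁻¹ • y)
          {y : EuclideanSpace ℝ (Fin d) | y ≠ 0} := by
        refine ContinuousOn.fun_smul ?_ continuousOn_id
        exact (continuous_norm.continuousOn).inv₀ fun y hy => norm_ne_zero_iff.mpr hy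
      have hmaps : Set.MapsTo (fun y : EuclideanSpace ℝ (Fin d) => ‖y‖⁻¹ • y)
          {y : EuclideanSpace ℝ (Fin d) | y ≠ 0}
          (Metric.sphere (0 : EuclideanSpace ℝ (Fin d)) 1) := by
        intro y hy
        rw [Metric.mem_sphere, dist_zero_right, norm_smul, norm_inv, norm_norm,
          inv_mul_cancel₀ (norm_ne_zero_iff.mpr hy)]
      have hρn : ContinuousAt (fun y : EuclideanSpace ℝ (Fin d) =>
          radialFn A (‖y‖⁻¹ • y)) x :=
        (hρ'.comp hncont hmaps).continuousAt (hUopen.mem_nhds hxU)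
      have hmin : ContinuousAt (fun y : EuclideanSpace ℝ (Fin d) =>
          min (ENNReal.ofReal ‖y‖) (radialFn A (‖y‖⁻¹ • y))) x :=
        ((ENNReal.continuous_ofReal.comp continuous_norm).continuousAt).min hρn
      have hfin : min (ENNReal.ofReal ‖x‖) (radialFn A (‖x‖⁻¹ • x)) ≠ ⊤ :=
        fun h => ENNReal.ofReal_ne_top (top_le_iff.mp (h ▸ min_le_left _ _))
      have htR : ContinuousAt (fun y : EuclideanSpace ℝ (Fin d) =>
          (min (ENNReal.ofReal ‖y‖) (radialFn A (‖y‖⁻¹ • y))).toReal) x :=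
        (ENNReal.tendsto_toReal hfin).comp hmin
      exact (continuous_norm.continuousAt).sub htR

theorem continuous_radialDist_iff {d : ℕ} (A : Set (EuclideanSpace ℝ (Fin d)))
    (hA : IsStarBody A) :
    Continuous (fun x => radialDist x A) ↔
      Continuous fun θ : Metric.sphere (0 : EuclideanSpace ℝ (Fin d)) 1 =>
        radialFn A (θ : EuclideanSpace ℝ (Fin d)) := by
  exact continuous_radialDist_iff' A hA
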